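/- Let m ≥ 2 and let A, B ∈ ℝ^{m×m} with det(A) > 0, and let ρ denote the spectral radius of A⁻¹B (the maximum modulus of its complex eigenvalues). If ρ > 0 and 0 ≤ ε ≤ 8 / (34 m ρ), then det(A) · (1 − (17√e / 8) m ε ρ) ≤ det(A + εB) ≤ det(A) · (1 + (17√e / 8) m ε ρ). In particular, for such ε, det(A)(1 − √e/2) ≤ det(A + εB) ≤ det(A)(1 + √e/2). -/

import Mathlib

open Matrix
open Polynomial

lemma aux_prod_bound (t : ℝ) (ht : 0 ≤ t) (s : Multiset ℂ)
    (h : ∀ μ ∈ s, ‖μ - 1‖ ≤ t) :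
    ‖s.prod - 1‖ ≤ (1 + t) ^ (Multiset.card s) - 1 := by
  induction s using Multiset.induction_on with
  | empty => simp
  | cons a s ih =>
    have ha : ‖a - 1‖ ≤ t := h a (Multiset.mem_cons_self a s)
    have hs := ih (fun μ hμ => h μ (Multiset.mem_cons_of_mem hμ))
    have hna : ‖a‖ ≤ 1 + t := by
      calc ‖a‖ = ‖(a - 1) + 1‖ := by ring_nf
      _ ≤ ‖a - 1‖ + ‖(1 : ℂ)‖ := norm_add_le _ _
      _ ≤ 1 + t := by rw [norm_one]; linarith
    rw [Multiset.prod_cons, Multiset.card_cons]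
    have key : a * s.prod - 1 = a * (s.prod - 1) + (a - 1) := by ring
    rw [key]
    calc ‖a * (s.prod - 1) + (a - 1)‖ ≤ ‖a‖ * ‖s.prod - 1‖ + ‖a - 1‖ := by
          refine (norm_add_le _ _).trans ?_; rw [norm_mul]
      _ ≤ (1 + t) * ((1 + t) ^ (Multiset.card s) - 1) + t :=
          add_le_add (mul_le_mul hna hs (norm_nonneg _) (by linarith)) ha
      _ = (1 + t) ^ (Multiset.card s + 1) - 1 := by ring

lemma aux_root_mem_spectrum {n : Type*} [Fintype n] [DecidableEq n] (N : Matrix n n ℂ) (μ : ℂ)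
    (hμ : μ ∈ N.charpoly.roots) : μ ∈ spectrum ℂ N := by
  rw [Polynomial.mem_roots (N.charpoly_monic.ne_zero)] at hμ
  have h0 : (Matrix.scalar n μ - N).det = 0 := by
    have h := hμ
    rwa [Matrix.charpoly, Polynomial.IsRoot.def, _root_.eval_det, matPolyEquiv_charmatrix, Polynomial.eval_sub,
      Polynomial.eval_X, Polynomial.eval_C] at h
  rw [spectrum.mem_iff]
  intro hu
  rw [Matrix.isUnit_iff_isUnit_det] at hu
  have : algebraMap ℂ (Matrix n n ℂ) μ = Matrix.scalar n μ := by
    ext i j; simp [Matrix.algebraMap_matrix_apply, Matrix.scalar_apply, Matrix.diagonal]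
  rw [this, h0] at hu
  exact hu.ne_zero rfl

/-- **Determinant perturbation bound (Lemma: determinant bounds).**
For `m ≥ 2`, `A, B ∈ ℝ^{m×m}` with `det A > 0`, and `ρ` the spectral radius of `A⁻¹B`
(the maximum modulus of the complex eigenvalues of its complexification), if `ρ > 0`
and `0 ≤ ε ≤ 8/(34 m ρ)`, then
`det A (1 - (17√e/8) m ε ρ) ≤ det(A + εB) ≤ det A (1 + (17√e/8) m ε ρ)`, and in
particular `det A (1 - √e/2) ≤ det(A + εB) ≤ det A (1 + √e/2)`. -/
theorem det_perturbation_bounds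
    (m : ℕ) (hm : 2 ≤ m) (A B : Matrix (Fin m) (Fin m) ℝ)
    (hA : 0 < A.det)
    (ρ ε : ℝ)
    (hρ : ENNReal.ofReal ρ = spectralRadius ℂ ((A⁻¹ * B).map fun x : ℝ => (x : ℂ)))
    (hρpos : 0 < ρ) (hε0 : 0 ≤ ε) (hε : ε ≤ 8 / (34 * m * ρ)) :
    (A.det * (1 - 17 * Real.sqrt (Real.exp 1) / 8 * m * ε * ρ) ≤ (A + ε • B).det
      ∧ (A + ε • B).det ≤ A.det * (1 + 17 * Real.sqrt (Real.exp 1) / 8 * m * ε * ρ))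
    ∧ (A.det * (1 - Real.sqrt (Real.exp 1) / 2) ≤ (A + ε • B).det
      ∧ (A + ε • B).det ≤ A.det * (1 + Real.sqrt (Real.exp 1) / 2)) := by
  have hm0 : 0 < (m : ℝ) := by positivity
  set M : Matrix (Fin m) (Fin m) ℝ := A⁻¹ * B with hM
  set M' : Matrix (Fin m) (Fin m) ℂ := M.map (fun x : ℝ => (x : ℂ)) with hM'
  -- spectrum bound
  have hspec : ∀ z ∈ spectrum ℂ M', ‖z‖ ≤ ρ := by
    intro z hz
    have h1 : (‖z‖₊ : ENNReal) ≤ spectralRadius ℂ M' := by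
      unfold spectralRadius
      exact le_iSup₂ (f := fun k (_ : k ∈ spectrum ℂ M') => (‖k‖₊ : ENNReal)) z hz
    rw [← hρ, ← ENNReal.ofReal_coe_nnreal, coe_nnnorm] at h1
    exact (ENNReal.ofReal_le_ofReal_iff hρpos.le).mp h1
  -- factorization
  have hAdet : IsUnit A.det := isUnit_iff_ne_zero.mpr hA.ne'
  have hfact : A + ε • B = A * (1 + ε • M) := by
    rw [Matrix.mul_add, Matrix.mul_one, Matrix.mul_smul, hM, ← Matrix.mul_assoc,
      Matrix.mul_nonsing_inv A hAdet, Matrix.one_mul]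
  set D : ℝ := (1 + ε • M).det with hD
  have hdet : (A + ε • B).det = A.det * D := by rw [hfact, Matrix.det_mul]
  -- key bound
  have hkey : |D - 1| ≤ (1 + ε * ρ) ^ m - 1 := by
    rcases eq_or_lt_of_le hε0 with h0 | hεpos
    · simp [hD, ← h0]
    · set N : Matrix (Fin m) (Fin m) ℂ := 1 + (ε : ℂ) • M' with hN
      have hmap : ((1 : Matrix (Fin m) (Fin m) ℝ) + ε • M).map (fun x : ℝ => (x : ℂ)) = N := by
        ext i j
        by_cases h : i = j <;>
          simp [h, Matrix.map_apply, Matrix.one_apply, hN, hM', Matrix.add_apply]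
      have hDC : (D : ℂ) = N.det := by
        rw [← hmap, hD]
        calc ((((1 + ε • M).det : ℝ)) : ℂ) = Complex.ofRealHom (1 + ε • M).det := rfl
          _ = (Complex.ofRealHom.mapMatrix (1 + ε • M)).det := RingHom.map_det _ _
          _ = ((1 + ε • M).map fun x : ℝ => (x : ℂ)).det := rfl
      have hcard : Multiset.card N.charpoly.roots = m := by
        rw [(Polynomial.splits_iff_card_roots).mp (IsAlgClosed.splits N.charpoly),
          Matrix.charpoly_natDegree_eq_dim, Fintype.card_fin]
      have hroot : ∀ μ ∈ N.charpoly.roots, ‖μ - 1‖ ≤ ε * ρ := by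
        intro μ hμ
        have hsmem := aux_root_mem_spectrum N μ hμ
        have hrw : N = algebraMap ℂ (Matrix (Fin m) (Fin m) ℂ) 1 + (ε : ℂ) • M' := by
          simp [hN]
        rw [hrw, ← spectrum.vadd_eq] at hsmem
        obtain ⟨w, hw, rfl⟩ := hsmem
        have hεC : (ε : ℂ) ≠ 0 := by exact_mod_cast hεpos.ne'
        have hu : ((ε : ℂ) • M') = (Units.mk0 (ε : ℂ) hεC) • M' := rfl
        rw [hu, spectrum.unit_smul_eq_smul] at hw
        obtain ⟨z, hz, rfl⟩ := hw
        have hzρ := hspec z hz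
        simp only [vadd_eq_add, Units.smul_def, Units.val_mk0, smul_eq_mul]
        rw [show (1 : ℂ) + (ε : ℂ) * z - 1 = (ε : ℂ) * z by ring, norm_mul,
          Complex.norm_real, Real.norm_eq_abs, abs_of_pos hεpos]
        exact mul_le_mul_of_nonneg_left hzρ hεpos.le
      have hprod := aux_prod_bound (ε * ρ) (by positivity) N.charpoly.roots hroot
      rw [hcard, ← Matrix.det_eq_prod_roots_charpoly, ← hDC] at hprod
      rwa [show ((D : ℂ) - 1) = ((D - 1 : ℝ) : ℂ) by push_cast; ring,
        Complex.norm_real, Real.norm_eq_abs] at hprod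
  -- numeric bounds
  set s : ℝ := (m : ℝ) * ε * ρ with hsdef
  have hs0 : 0 ≤ s := by positivity
  have hs17 : s ≤ 4 / 17 := by
    have h34 : 0 < 34 * (m : ℝ) * ρ := by positivity
    rw [le_div_iff₀ h34] at hε
    nlinarith
  have hsqrt0 : 0 ≤ Real.sqrt (Real.exp 1) := Real.sqrt_nonneg _
  have hbound2 : (1 + ε * ρ) ^ m - 1 ≤ Real.sqrt (Real.exp 1) * s := by
    have h1 : (1 + ε * ρ) ^ m ≤ Real.exp s := by
      calc (1 + ε * ρ) ^ m ≤ (Real.exp (ε * ρ)) ^ m := by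
            apply pow_le_pow_left₀ (by positivity)
            linarith [Real.add_one_le_exp (ε * ρ)]
        _ = Real.exp ((m : ℝ) * (ε * ρ)) := by rw [← Real.exp_nat_mul]
        _ = Real.exp s := by rw [hsdef]; ring_nf
    have h2 : Real.exp s ≤ Real.sqrt (Real.exp 1) := by
      rw [← Real.exp_half]
      exact Real.exp_le_exp.mpr (by linarith)
    have h3 : Real.exp s - 1 ≤ s * Real.exp s := by
      have h4 := Real.add_one_le_exp (-s)
      have h5 : Real.exp (-s) * Real.exp s = 1 := by rw [← Real.exp_add]; simp
      nlinarith [Real.exp_pos s]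
    nlinarith
  have hc1 : Real.sqrt (Real.exp 1) * s ≤ 17 * Real.sqrt (Real.exp 1) / 8 * m * ε * ρ := by
    have : 17 * Real.sqrt (Real.exp 1) / 8 * m * ε * ρ = 17 / 8 * (Real.sqrt (Real.exp 1) * s) := by
      rw [hsdef]; ring
    rw [this]
    nlinarith
  have hc2 : 17 * Real.sqrt (Real.exp 1) / 8 * m * ε * ρ ≤ Real.sqrt (Real.exp 1) / 2 := by
    have h : 17 * Real.sqrt (Real.exp 1) / 8 * m * ε * ρ = 17 / 8 * Real.sqrt (Real.exp 1) * s := by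
      rw [hsdef]; ring
    rw [h]
    nlinarith
  have habs := abs_le.mp hkey
  have hDl : 1 - 17 * Real.sqrt (Real.exp 1) / 8 * m * ε * ρ ≤ D := by linarith
  have hDu : D ≤ 1 + 17 * Real.sqrt (Real.exp 1) / 8 * m * ε * ρ := by linarith
  rw [hdet]
  refine ⟨⟨?_, ?_⟩, ?_, ?_⟩
  · exact mul_le_mul_of_nonneg_left hDl hA.le
  · exact mul_le_mul_of_nonneg_left hDu hA.le
  · exact mul_le_mul_of_nonneg_left (by linarith) hA.le
  · exact mul_le_mul_of_nonneg_left (by linarith) hA.le
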